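/- Let (Θ_t) be the spectral tail process of a regularly varying stationary sequence with index α>0 such that ‖Θ‖_α^α=Σ_{t∈ℤ}|Θ_t|^α<∞ a.s., let Q=Θ/‖Θ‖_α, θ=E[max_{t∈ℤ}|Q_t|^α], and let Q̃ be the associated changed-measure cluster process. Then: (i) if 1<α<2 and the anti-clustering condition holds (so that E[(Σ_{t∈ℤ}|Q_t|)^α]<∞), then E[Σ_{t∈ℤ}|Q̃_t|] = θ^{−1}·E[(max_{t∈ℤ}|Q_t|)^{α−1}·Σ_{t∈ℤ}|Q_t|] ≤ θ^{−1}(E[(Σ_{t∈ℤ}|Q_t|)^α])^{1/α} < ∞; (ii) if 0<α<1, then E[Σ_{t∈ℤ}|Q̃_t|] ≤ θ^{−1} < ∞. -/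

import Mathlib

open MeasureTheory Filter Real Set
open scoped Topology ENNReal NNReal RealInnerProductSpace ProbabilityTheory

noncomputable section

/-- Euclidean space `ℝ^d`. -/
abbrev Euc (d : ℕ) : Type := EuclideanSpace ℝ (Fin d)

variable {Ω : Type*} [MeasurableSpace Ω]

/-- Partial sums `S_n = X_1 + ⋯ + X_n`. -/
def pSum {d : ℕ} (X : ℤ → Ω → Euc d) (n : ℕ) (ω : Ω) : Euc d :=
  ∑ t ∈ Finset.Icc (1 : ℤ) (n : ℤ), X t ω

/-- Partial maxima `M_n = max_{1 ≤ i ≤ n} |X_i|`. -/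
def pMax {d : ℕ} (X : ℤ → Ω → Euc d) (n : ℕ) (ω : Ω) : ℝ :=
  (((Finset.Icc (1 : ℤ) (n : ℤ)).sup fun t => ‖X t ω‖₊ : ℝ≥0) : ℝ)

/-- `γ_{n,p}^p = Σ_{t=1}^n |X_t|^p`. -/
def pModP {d : ℕ} (X : ℤ → Ω → Euc d) (p : ℝ) (n : ℕ) (ω : Ω) : ℝ :=
  ∑ t ∈ Finset.Icc (1 : ℤ) (n : ℤ), ‖X t ω‖ ^ p

/-- Strict stationarity of an `ℝ^d`-valued sequence indexed by `ℤ`. -/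
def Stationary {d : ℕ} (P : Measure Ω) (X : ℤ → Ω → Euc d) : Prop :=
  ∀ k : ℤ, Measure.map (fun ω => (fun t : ℤ => X (t + k) ω)) P
    = Measure.map (fun ω => (fun t : ℤ => X t ω)) P

/-- `Y` is Pareto(α): `P(Y > y) = y^{-α}` for `y ≥ 1`. -/
def Pareto (P : Measure Ω) (α : ℝ) (Y : Ω → ℝ) : Prop :=
  ∀ y : ℝ, 1 ≤ y → (P {ω | y < Y ω}).toReal = y ^ (-α)

/-- Regular variation of the stationary sequence `X` with index `α`, tail process `Y • Θ`:
for every `h ≥ 0`, the conditional law of `x⁻¹(X_{-h},…,X_h)` given `|X_0| > x` converges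
weakly, as `x → ∞`, to the law of `Y • (Θ_{-h},…,Θ_h)`, with `Y` Pareto(α) independent of `Θ`. -/
def RegVary {d : ℕ} (P : Measure Ω) (X : ℤ → Ω → Euc d) (α : ℝ)
    (Y : Ω → ℝ) (Θ : ℤ → Ω → Euc d) : Prop :=
  Pareto P α Y ∧
  ProbabilityTheory.IndepFun Y (fun ω => (fun t : ℤ => Θ t ω)) P ∧
  ∀ h : ℕ, ∀ f : BoundedContinuousFunction (Fin (2 * h + 1) → Euc d) ℝ,
    Tendsto (fun x : ℝ =>
        (∫ ω, Set.indicator {ω' | x < ‖X 0 ω'‖}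
            (fun ω' => f (fun i => x⁻¹ • X ((i : ℤ) - (h : ℤ)) ω')) ω ∂P)
          / (P {ω | x < ‖X 0 ω‖}).toReal)
      atTop
      (𝓝 (∫ ω, f (fun i => Y ω • Θ ((i : ℤ) - (h : ℤ)) ω) ∂P))

/-- Normalizing sequence: `a_n > 0` and `n P(|X_0| > a_n) → 1`. -/
def NormSeq {d : ℕ} (P : Measure Ω) (X : ℤ → Ω → Euc d) (a : ℕ → ℝ) : Prop :=
  (∀ n, 0 < a n) ∧
  Tendsto (fun n : ℕ => (n : ℝ) * (P {ω | a n < ‖X 0 ω‖}).toReal) atTop (𝓝 1)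

/-- Hybrid characteristic function `E[exp(i c⁻¹ uᵀ S_m) 1(c⁻¹ M_m ≤ x)]`. -/
def hybCF {d : ℕ} (P : Measure Ω) (X : ℤ → Ω → Euc d) (c : ℝ) (m : ℕ)
    (u : Euc d) (x : ℝ) : ℂ :=
  ∫ ω, Set.indicator {ω' | pMax X m ω' ≤ c * x}
    (fun ω' => Complex.exp (Complex.I * ((⟪u, pSum X m ω'⟫ / c : ℝ) : ℂ))) ω ∂P

/-- The mixing condition (M). -/
def MixM {d : ℕ} (P : Measure Ω) (X : ℤ → Ω → Euc d) (a : ℕ → ℝ) (r : ℕ → ℕ) : Prop :=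
  ∀ (u : Euc d) (x : ℝ), 0 < x →
    Tendsto (fun n : ℕ =>
        hybCF P X (a n) n u x - hybCF P X (a n) (r n) u x ^ (n / r n))
      atTop (𝓝 0)

/-- Hybrid characteristic function–Laplace transform
`E[exp(i c⁻¹ uᵀ S_m − c^{-p} λ γ_{m,p}^p) 1(c⁻¹ M_m ≤ x)]`. -/
def hybCFL {d : ℕ} (P : Measure Ω) (X : ℤ → Ω → Euc d) (c p : ℝ) (m : ℕ)
    (u : Euc d) (x lam : ℝ) : ℂ :=
  ∫ ω, Set.indicator {ω' | pMax X m ω' ≤ c * x}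
    (fun ω' => Complex.exp (Complex.I * ((⟪u, pSum X m ω'⟫ / c : ℝ) : ℂ)
      - ((lam * pModP X p m ω' / c ^ p : ℝ) : ℂ))) ω ∂P

/-- The strengthened mixing condition (M_p). -/
def MixMp {d : ℕ} (P : Measure Ω) (X : ℤ → Ω → Euc d) (a : ℕ → ℝ) (r : ℕ → ℕ)
    (p : ℝ) : Prop :=
  ∀ (u : Euc d) (x lam : ℝ), 0 < x → 0 < lam →
    Tendsto (fun n : ℕ =>
        hybCFL P X (a n) p n u x lam - hybCFL P X (a n) p (r n) u x lam ^ (n / r n))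
      atTop (𝓝 0)

/-- The anti-clustering condition (AC). -/
def AntiCl {d : ℕ} (P : Measure Ω) (X : ℤ → Ω → Euc d) (a : ℕ → ℝ) (r : ℕ → ℕ) : Prop :=
  Tendsto (fun k : ℕ =>
      Filter.limsup (fun n : ℕ =>
        (n : ℝ) * ∑ j ∈ Finset.Icc (k : ℤ) (r n : ℤ),
          ∫ ω, min (‖X j ω‖ / a n) 1 * min (‖X 0 ω‖ / a n) 1 ∂P) atTop)
    atTop (𝓝 0)

/-- `‖Θ‖_α = (Σ_{t∈ℤ} |Θ_t|^α)^{1/α}`. -/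
def thNorm {d : ℕ} (α : ℝ) (Θ : ℤ → Ω → Euc d) (ω : Ω) : ℝ :=
  (∑' t : ℤ, ‖Θ t ω‖ ^ α) ^ (1 / α)

/-- Spectral cluster process `Q = Θ / ‖Θ‖_α`. -/
def cQ {d : ℕ} (α : ℝ) (Θ : ℤ → Ω → Euc d) (t : ℤ) (ω : Ω) : Euc d :=
  (thNorm α Θ ω)⁻¹ • Θ t ω

/-- `max_{t∈ℤ} |Q_t|`. -/
def cQmax {d : ℕ} (α : ℝ) (Θ : ℤ → Ω → Euc d) (ω : Ω) : ℝ :=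
  ⨆ t : ℤ, ‖cQ α Θ t ω‖

/-- `Σ_{t∈ℤ} Q_t`. -/
def cQsum {d : ℕ} (α : ℝ) (Θ : ℤ → Ω → Euc d) (ω : Ω) : Euc d :=
  ∑' t : ℤ, cQ α Θ t ω

/-- `Σ_{t∈ℤ} |Q_t|^p`. -/
def cQpsum {d : ℕ} (α p : ℝ) (Θ : ℤ → Ω → Euc d) (ω : Ω) : ℝ :=
  ∑' t : ℤ, ‖cQ α Θ t ω‖ ^ p

/-- `‖Q‖_p = (Σ_{t∈ℤ} |Q_t|^p)^{1/p}`. -/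
def cQpnorm {d : ℕ} (α p : ℝ) (Θ : ℤ → Ω → Euc d) (ω : Ω) : ℝ :=
  cQpsum α p Θ ω ^ (1 / p)

/-- Extremal index `θ = E[max_{t∈ℤ}|Q_t|^α]`. -/
def extIdx {d : ℕ} (P : Measure Ω) (α : ℝ) (Θ : ℤ → Ω → Euc d) : ℝ :=
  ∫ ω, cQmax α Θ ω ^ α ∂P

/-- The law of `Q̃`: the conditional law of `Q / max_t |Q_t|` given `Y·max_t|Q_t| > 1`. -/
def lawQtilde {d : ℕ} (P : Measure Ω) (α : ℝ) (Y : Ω → ℝ) (Θ : ℤ → Ω → Euc d) :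
    Measure (ℤ → Euc d) :=
  (P {ω | 1 < Y ω * cQmax α Θ ω})⁻¹ •
    Measure.map (fun ω => (fun t : ℤ => (cQmax α Θ ω)⁻¹ • cQ α Θ t ω))
      (P.restrict {ω | 1 < Y ω * cQmax α Θ ω})

/-- `σ^α(u) = E[|uᵀ Σ_t Q_t|^α]`. -/
def sigmaAl {d : ℕ} (P : Measure Ω) (α : ℝ) (Θ : ℤ → Ω → Euc d) (u : Euc d) : ℝ :=
  ∫ ω, |⟪u, cQsum α Θ ω⟫| ^ α ∂P

/-- `β(u)`. -/
def betaAl {d : ℕ} (P : Measure Ω) (α : ℝ) (Θ : ℤ → Ω → Euc d) (u : Euc d) : ℝ :=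
  (∫ ω, (max ⟪u, cQsum α Θ ω⟫ 0 ^ α - max (-⟪u, cQsum α Θ ω⟫) 0 ^ α) ∂P)
    / sigmaAl P α Θ u

/-- `c_α = Γ(2−α) cos(απ/2)/(1−α)`. -/
def cAl (α : ℝ) : ℝ := Real.Gamma (2 - α) * Real.cos (α * π / 2) / (1 - α)

/-- The α-stable characteristic function `φ_{ξ_α}`. -/
def stableCF {d : ℕ} (P : Measure Ω) (α : ℝ) (Θ : ℤ → Ω → Euc d) (u : Euc d) : ℂ :=
  Complex.exp (-(((cAl α * sigmaAl P α Θ u : ℝ)) : ℂ) *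
    (1 - Complex.I * ((betaAl P α Θ u : ℝ) : ℂ) * ((Real.tan (α * π / 2) : ℝ) : ℂ)))

/-- Convergence in distribution (weak convergence of the laws of `Z_n` under `P` to `ν`). -/
def WeakLim {γ : Type*} [TopologicalSpace γ] [MeasurableSpace γ] (P : Measure Ω)
    (Z : ℕ → Ω → γ) (ν : Measure γ) : Prop :=
  ∀ f : BoundedContinuousFunction γ ℝ,
    Tendsto (fun n : ℕ => ∫ ω, f (Z n ω) ∂P) atTop (𝓝 (∫ z, f z ∂ν))

/-- For nonnegative functions, the real `tsum` equals the `toReal` of the `ℝ≥0∞` tsum. -/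
lemma tsum_eq_toReal_ofReal {f : ℤ → ℝ} (h0 : ∀ t, 0 ≤ f t) :
    ∑' t, f t = (∑' t, ENNReal.ofReal (f t)).toReal := by
  by_cases hs : Summable f
  · rw [← ENNReal.ofReal_tsum_of_nonneg h0 hs, ENNReal.toReal_ofReal (tsum_nonneg fun t => h0 t)]
  · rw [tsum_eq_zero_of_not_summable hs]
    have : ∑' t, ENNReal.ofReal (f t) = ∞ := by
      by_contra h
      exact hs (by simpa [fun t => ENNReal.toReal_ofReal (h0 t)] using ENNReal.summable_toReal h)
    simp [this]

lemma measurable_tsum_nonneg {β : Type*} [MeasurableSpace β] {f : ℤ → β → ℝ}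
    (hf : ∀ t, Measurable (f t)) (h0 : ∀ t x, 0 ≤ f t x) :
    Measurable (fun x => ∑' t, f t x) := by
  have : (fun x => ∑' t, f t x) = fun x => (∑' t, ENNReal.ofReal (f t x)).toReal := by
    funext x; exact tsum_eq_toReal_ofReal (fun t => h0 t x)
  rw [this]
  exact (Measurable.ennreal_tsum fun t => (hf t).ennreal_ofReal).ennreal_toReal

namespace RVaux

variable {d : ℕ}

def tsA (α : ℝ) (w : ℤ → Euc d) : ℝ := ∑' t, ‖w t‖ ^ α
def nrm (α : ℝ) (w : ℤ → Euc d) : ℝ := (tsA α w) ^ (1/α)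
def Qf (α : ℝ) (w : ℤ → Euc d) (t : ℤ) : Euc d := (nrm α w)⁻¹ • w t
def Mx (α : ℝ) (w : ℤ → Euc d) : ℝ := ⨆ t, ‖Qf α w t‖
def Sf (α : ℝ) (w : ℤ → Euc d) : ℝ := ∑' t, ‖Qf α w t‖

variable {α : ℝ}

lemma measurable_rpow_const_of_nonneg {β : Type*} [MeasurableSpace β] {f : β → ℝ} {c : ℝ}
    (hf : Measurable f) (hc : 0 ≤ c) : Measurable (fun x => f x ^ c) :=
  (Real.continuous_rpow_const hc).measurable.comp hf

lemma measurable_tsA (hα : 0 < α) : Measurable (tsA (d := d) α) :=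
  measurable_tsum_nonneg
    (fun t => measurable_rpow_const_of_nonneg (measurable_pi_apply t).norm hα.le)
    (fun t x => Real.rpow_nonneg (norm_nonneg _) _)

lemma measurable_nrm (hα : 0 < α) : Measurable (nrm (d := d) α) :=
  measurable_rpow_const_of_nonneg (measurable_tsA hα) (by positivity)

lemma measurable_Qf (hα : 0 < α) (t : ℤ) : Measurable (fun w => Qf (d := d) α w t) :=
  ((measurable_nrm hα).inv).smul (measurable_pi_apply t)

lemma measurable_Mx (hα : 0 < α) : Measurable (Mx (d := d) α) :=
  Measurable.iSup (fun t => (measurable_Qf hα t).norm)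

lemma measurable_Sf (hα : 0 < α) : Measurable (Sf (d := d) α) :=
  measurable_tsum_nonneg (fun t => (measurable_Qf hα t).norm) (fun t x => norm_nonneg _)

lemma tsA_nonneg (α : ℝ) (w : ℤ → Euc d) : 0 ≤ tsA α w :=
  tsum_nonneg fun t => Real.rpow_nonneg (norm_nonneg _) _

lemma nrm_nonneg (α : ℝ) (w : ℤ → Euc d) : 0 ≤ nrm α w :=
  Real.rpow_nonneg (tsA_nonneg α w) _

lemma norm_Qf_le_one (hα : 0 < α) (w : ℤ → Euc d) (t : ℤ) : ‖Qf α w t‖ ≤ 1 := by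
  rcases eq_or_lt_of_le (nrm_nonneg α w) with h | h
  · simp [Qf, ← h]
  · by_cases hs : Summable (fun t => ‖w t‖ ^ α)
    · have hle : ‖w t‖ ^ α ≤ tsA α w := Summable.le_tsum hs t
        (fun s _ => Real.rpow_nonneg (norm_nonneg _) _)
      have hwt : ‖w t‖ ≤ nrm α w := by
        have h1 : ‖w t‖ = (‖w t‖ ^ α) ^ (1/α) := by
          rw [← Real.rpow_mul (norm_nonneg _), mul_one_div, div_self hα.ne', Real.rpow_one]
        rw [h1, nrm]
        exact Real.rpow_le_rpow (Real.rpow_nonneg (norm_nonneg _) _) hle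
          (by positivity)
      have : ‖Qf α w t‖ = (nrm α w)⁻¹ * ‖w t‖ := by
        rw [Qf, norm_smul, Real.norm_eq_abs, abs_inv, abs_of_nonneg (nrm_nonneg α w)]
      rw [this]
      calc (nrm α w)⁻¹ * ‖w t‖ ≤ (nrm α w)⁻¹ * nrm α w :=
            mul_le_mul_of_nonneg_left hwt (inv_nonneg.2 (nrm_nonneg α w))
        _ = 1 := inv_mul_cancel₀ h.ne'
    · have : tsA α w = 0 := tsum_eq_zero_of_not_summable hs
      have : nrm α w = 0 := by rw [nrm, this, Real.zero_rpow (by positivity)]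
      exact absurd this h.ne'

lemma bddAbove_Qf (hα : 0 < α) (w : ℤ → Euc d) :
    BddAbove (Set.range fun t => ‖Qf α w t‖) :=
  ⟨1, by rintro x ⟨t, rfl⟩; exact norm_Qf_le_one hα w t⟩

lemma Mx_le_one (hα : 0 < α) (w : ℤ → Euc d) : Mx α w ≤ 1 :=
  ciSup_le fun t => norm_Qf_le_one hα w t

lemma norm_Qf_le_Mx (hα : 0 < α) (w : ℤ → Euc d) (t : ℤ) : ‖Qf α w t‖ ≤ Mx α w :=
  le_ciSup (bddAbove_Qf hα w) t

lemma Mx_nonneg (hα : 0 < α) (w : ℤ → Euc d) : 0 ≤ Mx α w :=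
  le_trans (norm_nonneg _) (norm_Qf_le_Mx hα w 0)

lemma Sf_nonneg (α : ℝ) (w : ℤ → Euc d) : 0 ≤ Sf α w :=
  tsum_nonneg fun t => norm_nonneg _

lemma rpow_sub_one_eq {x α : ℝ} (hx : 0 ≤ x) (hα1 : α ≠ 1) :
    x ^ (α - 1) = x ^ α * x⁻¹ := by
  rcases eq_or_lt_of_le hx with h | h
  · rw [← h, Real.zero_rpow (sub_ne_zero.2 hα1), inv_zero, mul_zero]
  · rw [Real.rpow_sub h, Real.rpow_one, div_eq_mul_inv]

lemma Qf_eq_zero_of_Mx (hα : 0 < α) {w : ℤ → Euc d} (h : Mx α w = 0) (t : ℤ) :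
    Qf α w t = 0 := by
  have := norm_Qf_le_Mx hα w t
  rw [h] at this
  exact norm_le_zero_iff.mp this

lemma nrm_rpow (hα : 0 < α) (w : ℤ → Euc d) : nrm α w ^ α = tsA α w := by
  rw [nrm, ← Real.rpow_mul (tsA_nonneg α w), one_div, inv_mul_cancel₀ hα.ne', Real.rpow_one]

lemma summable_norm_Qf_rpow (hα : 0 < α) {w : ℤ → Euc d}
    (hs : Summable fun t => ‖w t‖ ^ α) :
    Summable fun t => ‖Qf α w t‖ ^ α := by
  have heq : ∀ t, ‖Qf α w t‖ ^ α = ((nrm α w)⁻¹) ^ α * ‖w t‖ ^ α := by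
    intro t
    rw [Qf, norm_smul, Real.norm_eq_abs, abs_inv, abs_of_nonneg (nrm_nonneg α w),
      Real.mul_rpow (inv_nonneg.2 (nrm_nonneg α w)) (norm_nonneg _)]
  simpa only [heq] using hs.mul_left _

lemma tsum_norm_Qf_rpow_le_one (hα : 0 < α) {w : ℤ → Euc d}
    (hs : Summable fun t => ‖w t‖ ^ α) :
    ∑' t, ‖Qf α w t‖ ^ α ≤ 1 := by
  have heq : ∀ t, ‖Qf α w t‖ ^ α = ((nrm α w)⁻¹) ^ α * ‖w t‖ ^ α := by
    intro t
    rw [Qf, norm_smul, Real.norm_eq_abs, abs_inv, abs_of_nonneg (nrm_nonneg α w),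
      Real.mul_rpow (inv_nonneg.2 (nrm_nonneg α w)) (norm_nonneg _)]
  simp only [heq]
  rw [tsum_mul_left]
  rcases eq_or_lt_of_le (nrm_nonneg α w) with h | h
  · rw [← h]
    rw [inv_zero, Real.zero_rpow hα.ne', zero_mul]
    norm_num
  · have htsA : tsA α w = nrm α w ^ α := (nrm_rpow hα w).symm
    have hts : (0:ℝ) < tsA α w := by
      rw [htsA]; exact Real.rpow_pos_of_pos h α
    rw [← tsA]
    rw [Real.inv_rpow (nrm_nonneg α w), nrm_rpow hα w]
    rw [inv_mul_cancel₀ hts.ne']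

/-- Case `α < 1`: pointwise bound `Mx^{α-1} · Sf ≤ 1`. -/
lemma bound_lt_one (hα : 0 < α) (hα1 : α < 1) {w : ℤ → Euc d}
    (hs : Summable fun t => ‖w t‖ ^ α) :
    Mx α w ^ (α - 1) * Sf α w ≤ 1 := by
  rcases eq_or_lt_of_le (Mx_nonneg hα w) with hM | hM
  · rw [← hM, Real.zero_rpow (by linarith : α - 1 ≠ 0), zero_mul]; norm_num
  · have hQs := summable_norm_Qf_rpow hα hs
    have hptw : ∀ t, ‖Qf α w t‖ ≤ Mx α w ^ (1 - α) * ‖Qf α w t‖ ^ α := by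
      intro t
      rcases eq_or_lt_of_le (norm_nonneg (Qf α w t)) with h0 | h0
      · rw [← h0, Real.zero_rpow hα.ne']
        positivity
      · calc ‖Qf α w t‖ = ‖Qf α w t‖ ^ (1 - α) * ‖Qf α w t‖ ^ α := by
              rw [← Real.rpow_add h0, sub_add_cancel, Real.rpow_one]
          _ ≤ Mx α w ^ (1 - α) * ‖Qf α w t‖ ^ α := by
              apply mul_le_mul_of_nonneg_right _ (Real.rpow_nonneg (norm_nonneg _) _)
              exact Real.rpow_le_rpow (norm_nonneg _) (norm_Qf_le_Mx hα w t) (by linarith)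
    have hSsum : Summable fun t => ‖Qf α w t‖ :=
      Summable.of_nonneg_of_le (fun t => norm_nonneg _) hptw (hQs.mul_left _)
    have hSle : Sf α w ≤ Mx α w ^ (1 - α) * ∑' t, ‖Qf α w t‖ ^ α := by
      rw [← tsum_mul_left]
      exact Summable.tsum_le_tsum hptw hSsum (hQs.mul_left _)
    calc Mx α w ^ (α - 1) * Sf α w
        ≤ Mx α w ^ (α - 1) * (Mx α w ^ (1 - α) * ∑' t, ‖Qf α w t‖ ^ α) := by
          apply mul_le_mul_of_nonneg_left hSle (Real.rpow_nonneg (Mx_nonneg hα w) _)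
      _ = Mx α w ^ (α - 1 + (1 - α)) * ∑' t, ‖Qf α w t‖ ^ α := by
          rw [Real.rpow_add hM, mul_assoc]
      _ ≤ 1 * 1 := by
          apply mul_le_mul _ (tsum_norm_Qf_rpow_le_one hα hs)
            (tsum_nonneg fun t => Real.rpow_nonneg (norm_nonneg _) _) zero_le_one
          simp
      _ = 1 := by norm_num

/-- Case `α > 1`: pointwise bound `Mx^{α-1} · Sf ≤ Sf^α`. -/
lemma bound_gt_one (hα1 : 1 < α) (w : ℤ → Euc d) :
    Mx α w ^ (α - 1) * Sf α w ≤ Sf α w ^ α := by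
  have hα : 0 < α := by linarith
  by_cases hs : Summable fun t => ‖Qf α w t‖
  · have hMS : Mx α w ≤ Sf α w :=
      ciSup_le fun t => Summable.le_tsum hs t fun s _ => norm_nonneg _
    have h1 : Mx α w ^ (α - 1) ≤ Sf α w ^ (α - 1) :=
      Real.rpow_le_rpow (Mx_nonneg hα w) hMS (by linarith)
    calc Mx α w ^ (α - 1) * Sf α w ≤ Sf α w ^ (α - 1) * Sf α w :=
          mul_le_mul_of_nonneg_right h1 (Sf_nonneg α w)
      _ = Sf α w ^ α := by
          rcases eq_or_lt_of_le (Sf_nonneg α w) with h0 | h0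
          · rw [← h0, Real.zero_rpow (by linarith : α - 1 ≠ 0),
              Real.zero_rpow hα.ne', zero_mul]
          · have h2 := (Real.rpow_add h0 (α-1) 1).symm
            rw [Real.rpow_one] at h2
            rw [h2, sub_add_cancel]
  · have : Sf α w = 0 := tsum_eq_zero_of_not_summable hs
    rw [Sf] at this
    rw [Sf, this, mul_zero, Real.zero_rpow hα.ne']




-- key lemma
/-- Key independence computation: for `Y` Pareto(α) independent of `W`, and `M` a measurable
functional of the path with values in `[0,1]`,
`∫⁻_{1 < Y · M(W)} G(W) = ∫⁻ (M(W))^α · G(W)`. -/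
lemma key {d : ℕ} (P : Measure Ω) [IsProbabilityMeasure P]
    {α : ℝ} (hα : 0 < α) {Y : Ω → ℝ} {W : Ω → (ℤ → Euc d)}
    (hY : Measurable Y) (hW : Measurable W)
    (hInd : ProbabilityTheory.IndepFun Y W P) (hPar : Pareto P α Y)
    {M : (ℤ → Euc d) → ℝ} (hM : Measurable M) (hM0 : ∀ w, 0 ≤ M w) (hM1 : ∀ w, M w ≤ 1)
    {G : (ℤ → Euc d) → ℝ≥0∞} (hG : Measurable G) :
    ∫⁻ ω in {ω | 1 < Y ω * M (W ω)}, G (W ω) ∂P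
      = ∫⁻ ω, ENNReal.ofReal (M (W ω) ^ α) * G (W ω) ∂P := by
  have hprod := (ProbabilityTheory.indepFun_iff_map_prod_eq_prod_map_map
    hY.aemeasurable hW.aemeasurable).mp hInd
  set F : ℝ × (ℤ → Euc d) → ℝ≥0∞ :=
    fun p => {q : ℝ × (ℤ → Euc d) | 1 < q.1 * M q.2}.indicator (fun q => G q.2) p with hF
  have hsetm : MeasurableSet {q : ℝ × (ℤ → Euc d) | 1 < q.1 * M q.2} :=
    measurableSet_lt measurable_const (measurable_fst.mul (hM.comp measurable_snd))
  have hFmeas : Measurable F := (hG.comp measurable_snd).indicator hsetm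
  have hAm : MeasurableSet {ω | 1 < Y ω * M (W ω)} :=
    measurableSet_lt measurable_const (hY.mul (hM.comp hW))
  have h1 : ∫⁻ ω in {ω | 1 < Y ω * M (W ω)}, G (W ω) ∂P = ∫⁻ ω, F (Y ω, W ω) ∂P := by
    rw [← lintegral_indicator hAm]
    rfl
  have hval : ∀ w : ℤ → Euc d,
      (Measure.map Y P) {y : ℝ | 1 < y * M w} = ENNReal.ofReal (M w ^ α) := by
    intro w
    have hsm : MeasurableSet {y : ℝ | 1 < y * M w} :=
      measurableSet_lt measurable_const (measurable_id.mul_const _)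
    rw [Measure.map_apply hY hsm]
    rcases eq_or_lt_of_le (hM0 w) with hMw | hMw
    · have : (Y ⁻¹' {y : ℝ | 1 < y * M w}) = ∅ := by
        ext ω; simp [← hMw]
      rw [this, measure_empty, ← hMw, Real.zero_rpow hα.ne', ENNReal.ofReal_zero]
    · have hset : (Y ⁻¹' {y : ℝ | 1 < y * M w}) = {ω | (M w)⁻¹ < Y ω} := by
        ext ω
        simp only [Set.mem_preimage, Set.mem_setOf_eq]
        rw [inv_eq_one_div, div_lt_iff₀ hMw]
      rw [hset]
      have hinv1 : (1:ℝ) ≤ (M w)⁻¹ := (one_le_inv₀ hMw).mpr (hM1 w)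
      have := hPar ((M w)⁻¹) hinv1
      have hrw : ((M w)⁻¹) ^ (-α) = M w ^ α := by
        rw [Real.inv_rpow (hM0 w), Real.rpow_neg (hM0 w), inv_inv]
      rw [← ENNReal.ofReal_toReal (measure_ne_top P {ω | (M w)⁻¹ < Y ω}), this, hrw]
  calc ∫⁻ ω in {ω | 1 < Y ω * M (W ω)}, G (W ω) ∂P
      = ∫⁻ ω, F (Y ω, W ω) ∂P := h1
    _ = ∫⁻ p, F p ∂(Measure.map (fun ω => (Y ω, W ω)) P) :=
        (lintegral_map hFmeas (hY.prodMk hW)).symm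
    _ = ∫⁻ p, F p ∂((Measure.map Y P).prod (Measure.map W P)) := by rw [hprod]
    _ = ∫⁻ y, ∫⁻ w, F (y, w) ∂(Measure.map W P) ∂(Measure.map Y P) :=
        lintegral_prod _ hFmeas.aemeasurable
    _ = ∫⁻ w, ∫⁻ y, F (y, w) ∂(Measure.map Y P) ∂(Measure.map W P) :=
        lintegral_lintegral_swap hFmeas.aemeasurable
    _ = ∫⁻ w, ENNReal.ofReal (M w ^ α) * G w ∂(Measure.map W P) := by
        apply lintegral_congr
        intro w
        have hFw : ∀ y : ℝ, F (y, w) = {y : ℝ | 1 < y * M w}.indicator (fun _ => G w) y := by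
          intro y
          by_cases h : 1 < y * M w <;> simp [hF, Set.indicator, h]
        simp only [hFw]
        rw [lintegral_indicator (measurableSet_lt measurable_const
          (measurable_id'.mul_const _)), setLIntegral_const, hval w]
        ring
    _ = ∫⁻ ω, ENNReal.ofReal (M (W ω) ^ α) * G (W ω) ∂P :=
        lintegral_map ((measurable_rpow_const_of_nonneg hM hα.le).ennreal_ofReal.mul hG) hW

/-- The test function `v ↦ min 1 ‖v 0‖` as a bounded continuous function. -/
def testf (d : ℕ) : BoundedContinuousFunction (Fin 1 → Euc d) ℝ :=
  BoundedContinuousFunction.mkOfBound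
    ⟨fun v => min 1 ‖v 0‖, by fun_prop⟩ 2
    (by
      intro x y
      rw [Real.dist_eq]
      have hx : min 1 ‖x 0‖ ∈ Set.Icc (0:ℝ) 1 :=
        ⟨le_min zero_le_one (norm_nonneg _), min_le_left _ _⟩
      have hy : min 1 ‖y 0‖ ∈ Set.Icc (0:ℝ) 1 :=
        ⟨le_min zero_le_one (norm_nonneg _), min_le_left _ _⟩
      rw [abs_sub_le_iff]
      constructor <;> [skip; skip] <;>
        · simp only [ContinuousMap.coe_mk] at *
          obtain ⟨a1, a2⟩ := hx; obtain ⟨b1, b2⟩ := hy; linarith)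

lemma norm_smul_ge_one {d : ℕ} (P : Measure Ω) [IsProbabilityMeasure P]
    (X Θ : ℤ → Ω → Euc d) (Y : Ω → ℝ) (α : ℝ)
    (hXm : ∀ t, Measurable (X t)) (hΘm : ∀ t, Measurable (Θ t)) (hYm : Measurable Y)
    (hrv : RegVary P X α Y Θ) :
    ∀ᵐ ω ∂P, 1 ≤ ‖Y ω • Θ 0 ω‖ := by
  obtain ⟨hPar, hInd, hconv⟩ := hrv
  -- Step 1: eventually the tail probability is positive.
  have hconst := hconv 0 (BoundedContinuousFunction.const _ (1:ℝ))
  have hevset : MeasurableSet {ω | (1:ℝ) < ‖X 0 ω‖} := by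
    exact measurableSet_lt measurable_const (hXm 0).norm
  have hlim1 : (∫ ω, (BoundedContinuousFunction.const (Fin (2*0+1) → Euc d) (1:ℝ))
      (fun i => Y ω • Θ ((i:ℤ) - ((0:ℕ):ℤ)) ω) ∂P) = 1 := by
    simp
  rw [hlim1] at hconst
  have hpos : ∀ᶠ x : ℝ in atTop, (P {ω | x < ‖X 0 ω‖}).toReal ≠ 0 := by
    have h2 := hconst.eventually (eventually_gt_nhds (by norm_num : (1:ℝ)/2 < 1))
    filter_upwards [h2] with x hx h0
    rw [h0, div_zero] at hx
    norm_num at hx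
  -- Step 2: the ratio for the test function is eventually 1.
  have hconvf := hconv 0 (testf d)
  have heq : (fun x : ℝ =>
      (∫ ω, Set.indicator {ω' | x < ‖X 0 ω'‖}
          (fun ω' => (testf d) (fun i => x⁻¹ • X ((i : ℤ) - ((0:ℕ) : ℤ)) ω')) ω ∂P)
        / (P {ω | x < ‖X 0 ω‖}).toReal) =ᶠ[atTop] (fun _ => (1:ℝ)) := by
    filter_upwards [hpos, eventually_ge_atTop (1:ℝ)] with x hx hx1
    have hxpos : (0:ℝ) < x := lt_of_lt_of_le zero_lt_one hx1
    have hker : ∀ ω' ∈ {ω' | x < ‖X 0 ω'‖},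
        (testf d) (fun i => x⁻¹ • X ((i : ℤ) - ((0:ℕ) : ℤ)) ω') = 1 := by
      intro ω' hω'
      have h0 : ((0 : Fin 1) : ℤ) - ((0:ℕ) : ℤ) = 0 := by simp
      have : (testf d) (fun i => x⁻¹ • X ((i : ℤ) - ((0:ℕ) : ℤ)) ω')
          = min 1 ‖x⁻¹ • X 0 ω'‖ := by
        show min 1 ‖x⁻¹ • X (((0 : Fin 1) : ℤ) - ((0:ℕ) : ℤ)) ω'‖ = _
        rw [h0]
      rw [this, norm_smul, norm_inv, Real.norm_eq_abs, abs_of_pos hxpos]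
      have : (1:ℝ) ≤ x⁻¹ * ‖X 0 ω'‖ := by
        rw [← div_eq_inv_mul, le_div_iff₀ hxpos, one_mul]
        exact le_of_lt hω'
      exact min_eq_left this
    rw [Set.indicator_congr hker]
    have hmset : MeasurableSet {ω' : Ω | x < ‖X 0 ω'‖} :=
      measurableSet_lt measurable_const (hXm 0).norm
    rw [integral_indicator_const (1:ℝ) hmset]
    simp only [smul_eq_mul, mul_one]
    exact div_self hx
  have hint1 : (∫ ω, (testf d) (fun i => Y ω • Θ ((i:ℤ) - ((0:ℕ):ℤ)) ω) ∂P) = 1 :=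
    tendsto_nhds_unique hconvf ((tendsto_congr' heq).mpr tendsto_const_nhds)
  -- Step 3: deduce the a.s. bound.
  have hfun : (fun ω => (testf d) (fun i => Y ω • Θ ((i:ℤ) - ((0:ℕ):ℤ)) ω))
      = fun ω => min 1 ‖Y ω • Θ 0 ω‖ := by
    funext ω
    show min 1 ‖Y ω • Θ (((0 : Fin 1) : ℤ) - ((0:ℕ) : ℤ)) ω‖ = _
    norm_num
  rw [hfun] at hint1
  set g : Ω → ℝ := fun ω => min 1 ‖Y ω • Θ 0 ω‖ with hg
  have hgm : Measurable g := measurable_const.min (hYm.smul (hΘm 0)).norm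
  have hgle : ∀ ω, g ω ≤ 1 := fun ω => min_le_left _ _
  have hg0 : ∀ ω, 0 ≤ g ω := fun ω => le_min zero_le_one (norm_nonneg _)
  have hgint : Integrable g P := by
    refine (integrable_const (1:ℝ)).mono' hgm.aestronglyMeasurable ?_
    filter_upwards with ω
    rw [Real.norm_eq_abs, abs_of_nonneg (hg0 ω)]
    exact hgle ω
  have hzero : (∫ ω, (1 - g ω) ∂P) = 0 := by
    rw [integral_sub (integrable_const 1) hgint, hint1]
    simp
  have hae : (fun ω => 1 - g ω) =ᵐ[P] 0 :=
    (integral_eq_zero_iff_of_nonneg (fun ω => by simpa using hgle ω)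
      ((integrable_const 1).sub hgint)).mp hzero
  filter_upwards [hae] with ω hω
  have : g ω = 1 := by
    have := hω
    simp only [Pi.zero_apply] at this
    linarith
  rw [hg] at this
  exact min_eq_left_iff.mp this

end RVaux

/-- Remark 4.2: integrability of `Σ_t |Q̃_t|`. (i) For `1 < α < 2` under anti-clustering
(so that `E[(Σ_t|Q_t|)^α] < ∞`), `E[Σ_t|Q̃_t|] = θ⁻¹ E[(max_t|Q_t|)^{α−1} Σ_t|Q_t|]
≤ θ⁻¹ (E[(Σ_t|Q_t|)^α])^{1/α} < ∞`; (ii) for `0 < α < 1`, `E[Σ_t|Q̃_t|] ≤ θ⁻¹ < ∞`. -/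
theorem qtilde_sum_integrable
    {Ω : Type*} [MeasurableSpace Ω] {d : ℕ}
    (P : Measure Ω) [IsProbabilityMeasure P]
    (X Θ Qt : ℤ → Ω → Euc d) (Y : Ω → ℝ) (α : ℝ) (a : ℕ → ℝ) (r : ℕ → ℕ)
    (hXm : ∀ t, Measurable (X t)) (hΘm : ∀ t, Measurable (Θ t)) (hYm : Measurable Y)
    (hα : 0 < α) (hα2 : α < 2)
    (hstat : Stationary P X)
    (hrv : RegVary P X α Y Θ)
    (ha : NormSeq P X a)
    (hr : Tendsto r atTop atTop) (hk : Tendsto (fun n => n / r n) atTop atTop)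
    (hΘsum : ∀ᵐ ω ∂P, Summable (fun t : ℤ => ‖Θ t ω‖ ^ α))
    (hQt : Measure.map (fun ω => (fun t : ℤ => Qt t ω)) P = lawQtilde P α Y Θ) :
    ((1 < α → AntiCl P X a r →
        Integrable (fun ω => (∑' t : ℤ, ‖cQ α Θ t ω‖) ^ α) P →
      Integrable (fun ω => ∑' t : ℤ, ‖Qt t ω‖) P ∧
      (∫ ω, (∑' t : ℤ, ‖Qt t ω‖) ∂P)
        = (extIdx P α Θ)⁻¹
            * ∫ ω, cQmax α Θ ω ^ (α - 1) * (∑' t : ℤ, ‖cQ α Θ t ω‖) ∂P ∧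
      (∫ ω, (∑' t : ℤ, ‖Qt t ω‖) ∂P)
        ≤ (extIdx P α Θ)⁻¹
            * (∫ ω, (∑' t : ℤ, ‖cQ α Θ t ω‖) ^ α ∂P) ^ (1 / α))) ∧
    (α < 1 →
      Integrable (fun ω => ∑' t : ℤ, ‖Qt t ω‖) P ∧
      (∫ ω, (∑' t : ℤ, ‖Qt t ω‖) ∂P) ≤ (extIdx P α Θ)⁻¹) := by
  classical
  have hα0 : α ≠ 0 := hα.ne'
  have hWm : Measurable (fun ω => (fun t : ℤ => Θ t ω)) :=
    measurable_pi_lambda _ fun t => hΘm t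
  obtain ⟨hPar, hInd, hconv⟩ := hrv
  have hMm : Measurable (fun ω => cQmax α Θ ω) :=
    (RVaux.measurable_Mx hα).comp hWm
  have hSm : Measurable (fun ω => ∑' t, ‖cQ α Θ t ω‖) :=
    (RVaux.measurable_Sf hα).comp hWm
  have hM0 : ∀ ω, 0 ≤ cQmax α Θ ω := fun ω => RVaux.Mx_nonneg hα _
  have hM1 : ∀ ω, cQmax α Θ ω ≤ 1 := fun ω => RVaux.Mx_le_one hα _
  have hS0 : ∀ ω, 0 ≤ ∑' t, ‖cQ α Θ t ω‖ := fun ω => RVaux.Sf_nonneg α _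
  -- the conditioning probability equals `∫⁻ M^α`
  have hPA : P {ω | 1 < Y ω * cQmax α Θ ω}
      = ∫⁻ ω, ENNReal.ofReal (cQmax α Θ ω ^ α) ∂P := by
    have h := RVaux.key P hα hYm hWm hInd hPar (RVaux.measurable_Mx hα)
      (RVaux.Mx_nonneg hα) (RVaux.Mx_le_one hα) (G := fun _ => (1:ℝ≥0∞)) measurable_const
    calc P {ω | 1 < Y ω * cQmax α Θ ω}
        = ∫⁻ _ω in {ω | 1 < Y ω * cQmax α Θ ω}, (1:ℝ≥0∞) ∂P := (setLIntegral_one _).symm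
      _ = ∫⁻ ω, ENNReal.ofReal (cQmax α Θ ω ^ α) * 1 ∂P := h
      _ = ∫⁻ ω, ENNReal.ofReal (cQmax α Θ ω ^ α) ∂P := by simp
  -- positivity of the extremal index
  have hYΘ : ∀ᵐ ω ∂P, 1 ≤ ‖Y ω • Θ 0 ω‖ :=
    RVaux.norm_smul_ge_one P X Θ Y α hXm hΘm hYm ⟨hPar, hInd, hconv⟩
  have hMpos : ∀ᵐ ω ∂P, 0 < cQmax α Θ ω := by
    filter_upwards [hYΘ, hΘsum] with ω h1 h2
    have hΘ0 : (0:ℝ) < ‖Θ 0 ω‖ := by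
      by_contra h
      push_neg at h
      have h3 : ‖Θ 0 ω‖ = 0 := le_antisymm h (norm_nonneg _)
      rw [norm_smul, h3, mul_zero] at h1
      linarith
    have hts : 0 < ∑' t, ‖Θ t ω‖ ^ α := by
      have hle : ‖Θ 0 ω‖ ^ α ≤ ∑' t, ‖Θ t ω‖ ^ α :=
        Summable.le_tsum h2 0 fun s _ => Real.rpow_nonneg (norm_nonneg _) _
      have := Real.rpow_pos_of_pos hΘ0 α
      linarith
    have hnrm : 0 < thNorm α Θ ω := Real.rpow_pos_of_pos hts _
    have hq0 : 0 < ‖cQ α Θ 0 ω‖ := by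
      rw [cQ, norm_smul, Real.norm_eq_abs, abs_inv, abs_of_pos hnrm]
      positivity
    exact lt_of_lt_of_le hq0 (RVaux.norm_Qf_le_Mx hα (fun t => Θ t ω) 0)
  have hMαm : Measurable (fun ω => ENNReal.ofReal (cQmax α Θ ω ^ α)) :=
    (RVaux.measurable_rpow_const_of_nonneg hMm hα.le).ennreal_ofReal
  have hPApos : 0 < P {ω | 1 < Y ω * cQmax α Θ ω} := by
    rw [hPA]
    by_contra h
    push_neg at h
    have h0 : (∫⁻ ω, ENNReal.ofReal (cQmax α Θ ω ^ α) ∂P) = 0 :=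
      le_antisymm (by simpa using h) zero_le
    rw [lintegral_eq_zero_iff hMαm] at h0
    have hne : (ae P).NeBot := ae_neBot.mpr (IsProbabilityMeasure.ne_zero P)
    obtain ⟨ω, hω1, hω2⟩ := (h0.and hMpos).exists
    simp only [Pi.zero_apply] at hω1
    have hpos : (0:ℝ) < cQmax α Θ ω ^ α := Real.rpow_pos_of_pos hω2 α
    have := ENNReal.ofReal_eq_zero.mp hω1
    linarith
  have hθeq : extIdx P α Θ = (P {ω | 1 < Y ω * cQmax α Θ ω}).toReal := by
    rw [extIdx, hPA]
    exact integral_eq_lintegral_of_nonneg_ae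
      (Filter.Eventually.of_forall fun ω => Real.rpow_nonneg (hM0 ω) α)
      (RVaux.measurable_rpow_const_of_nonneg hMm hα.le).aestronglyMeasurable
  have hθpos : 0 < extIdx P α Θ := by
    rw [hθeq]
    exact ENNReal.toReal_pos hPApos.ne' (measure_ne_top P _)
  have hcinv : ((P {ω | 1 < Y ω * cQmax α Θ ω})⁻¹).toReal = (extIdx P α Θ)⁻¹ := by
    rw [ENNReal.toReal_inv, hθeq]
  have hcne : (P {ω | 1 < Y ω * cQmax α Θ ω})⁻¹ ≠ ⊤ :=
    ENNReal.inv_ne_top.mpr hPApos.ne'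
  -- a.e. measurability of the cluster process `Q̃`
  have hTm : Measurable (fun ω => (fun t : ℤ => (cQmax α Θ ω)⁻¹ • cQ α Θ t ω)) :=
    measurable_pi_lambda _ fun t => hMm.inv.smul ((RVaux.measurable_Qf hα t).comp hWm)
  have hQtsAE : AEMeasurable (fun ω => (fun t : ℤ => Qt t ω)) P := by
    by_contra h
    rw [Measure.map_of_not_aemeasurable h] at hQt
    have h1 : lawQtilde P α Y Θ Set.univ = 1 := by
      simp only [lawQtilde]
      rw [Measure.smul_apply, Measure.map_apply hTm MeasurableSet.univ,
        Set.preimage_univ, Measure.restrict_apply_univ, smul_eq_mul]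
      exact ENNReal.inv_mul_cancel hPApos.ne' (measure_ne_top P _)
    rw [← hQt] at h1
    simp at h1
  have hΦm : Measurable (fun q : ℤ → Euc d => ∑' t, ‖q t‖) :=
    measurable_tsum_nonneg (fun t => (measurable_pi_apply t).norm) (fun t x => norm_nonneg _)
  have hGm : Measurable (fun w : ℤ → Euc d =>
      ENNReal.ofReal ((RVaux.Mx α w)⁻¹ * RVaux.Sf α w)) :=
    ((RVaux.measurable_Mx hα).inv.mul (RVaux.measurable_Sf hα)).ennreal_ofReal
  -- main change-of-measure computation
  have hJ : ∀ _ : α ≠ 1,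
      (∫⁻ ω, ENNReal.ofReal (∑' t, ‖Qt t ω‖) ∂P)
        = (P {ω | 1 < Y ω * cQmax α Θ ω})⁻¹
            * ∫⁻ ω, ENNReal.ofReal (cQmax α Θ ω ^ (α - 1) * ∑' t, ‖cQ α Θ t ω‖) ∂P := by
    intro hα1
    calc (∫⁻ ω, ENNReal.ofReal (∑' t, ‖Qt t ω‖) ∂P)
        = ∫⁻ q, ENNReal.ofReal (∑' t, ‖q t‖)
            ∂(Measure.map (fun ω => (fun t : ℤ => Qt t ω)) P) :=
          (lintegral_map' hΦm.ennreal_ofReal.aemeasurable hQtsAE).symm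
      _ = (P {ω | 1 < Y ω * cQmax α Θ ω})⁻¹
            * ∫⁻ q, ENNReal.ofReal (∑' t, ‖q t‖)
                ∂(Measure.map (fun ω => (fun t : ℤ => (cQmax α Θ ω)⁻¹ • cQ α Θ t ω))
                    (P.restrict {ω | 1 < Y ω * cQmax α Θ ω})) := by
          rw [hQt]
          simp only [lawQtilde]
          rw [lintegral_smul_measure, smul_eq_mul]
      _ = (P {ω | 1 < Y ω * cQmax α Θ ω})⁻¹
            * ∫⁻ ω in {ω | 1 < Y ω * cQmax α Θ ω},
                ENNReal.ofReal (∑' t, ‖(cQmax α Θ ω)⁻¹ • cQ α Θ t ω‖) ∂P := by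
          rw [lintegral_map hΦm.ennreal_ofReal hTm]
      _ = (P {ω | 1 < Y ω * cQmax α Θ ω})⁻¹
            * ∫⁻ ω in {ω | 1 < Y ω * cQmax α Θ ω},
                ENNReal.ofReal ((RVaux.Mx α (fun t => Θ t ω))⁻¹
                  * RVaux.Sf α (fun t => Θ t ω)) ∂P := by
          congr 1
          apply lintegral_congr
          intro ω
          congr 1
          have h1 : ∀ t : ℤ, ‖(cQmax α Θ ω)⁻¹ • cQ α Θ t ω‖
              = (cQmax α Θ ω)⁻¹ * ‖cQ α Θ t ω‖ := by
            intro t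
            rw [norm_smul, Real.norm_eq_abs, abs_inv, abs_of_nonneg (hM0 ω)]
          calc (∑' t, ‖(cQmax α Θ ω)⁻¹ • cQ α Θ t ω‖)
              = ∑' t, (cQmax α Θ ω)⁻¹ * ‖cQ α Θ t ω‖ := tsum_congr h1
            _ = (cQmax α Θ ω)⁻¹ * ∑' t, ‖cQ α Θ t ω‖ := tsum_mul_left
      _ = (P {ω | 1 < Y ω * cQmax α Θ ω})⁻¹
            * ∫⁻ ω, ENNReal.ofReal (cQmax α Θ ω ^ α)
                * ENNReal.ofReal ((cQmax α Θ ω)⁻¹ * ∑' t, ‖cQ α Θ t ω‖) ∂P := by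
          congr 1
          exact RVaux.key P hα hYm hWm hInd hPar (RVaux.measurable_Mx hα)
            (RVaux.Mx_nonneg hα) (RVaux.Mx_le_one hα) hGm
      _ = (P {ω | 1 < Y ω * cQmax α Θ ω})⁻¹
            * ∫⁻ ω, ENNReal.ofReal (cQmax α Θ ω ^ (α - 1) * ∑' t, ‖cQ α Θ t ω‖) ∂P := by
          congr 1
          apply lintegral_congr
          intro ω
          rw [← ENNReal.ofReal_mul (Real.rpow_nonneg (hM0 ω) α)]
          congr 1
          rw [RVaux.rpow_sub_one_eq (hM0 ω) hα1]
          ring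
  -- shared consequence: integrability and the value of the integral
  have key2 : ∀ _ : α ≠ 1,
      (∫⁻ ω, ENNReal.ofReal (cQmax α Θ ω ^ (α - 1) * ∑' t, ‖cQ α Θ t ω‖) ∂P) ≠ ⊤ →
      Integrable (fun ω => ∑' t, ‖Qt t ω‖) P ∧
      (∫ ω, (∑' t, ‖Qt t ω‖) ∂P) = (extIdx P α Θ)⁻¹
        * (∫⁻ ω, ENNReal.ofReal (cQmax α Θ ω ^ (α - 1) * ∑' t, ‖cQ α Θ t ω‖) ∂P).toReal := by
    intro hα1 hLne
    have hJ' := hJ hα1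
    have haesm : AEStronglyMeasurable (fun ω => ∑' t, ‖Qt t ω‖) P :=
      (hΦm.comp_aemeasurable hQtsAE).aestronglyMeasurable
    refine ⟨⟨haesm, ?_⟩, ?_⟩
    · show (∫⁻ ω, (‖∑' t, ‖Qt t ω‖‖₊ : ℝ≥0∞) ∂P) < ⊤
      have heq : (∫⁻ ω, (‖∑' t, ‖Qt t ω‖‖₊ : ℝ≥0∞) ∂P)
          = ∫⁻ ω, ENNReal.ofReal (∑' t, ‖Qt t ω‖) ∂P :=
        lintegral_congr fun ω => Real.enorm_eq_ofReal (tsum_nonneg fun t => norm_nonneg _)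
      rw [heq, hJ']
      exact ENNReal.mul_lt_top hcne.lt_top hLne.lt_top
    · rw [integral_eq_lintegral_of_nonneg_ae
        (Filter.Eventually.of_forall fun ω => tsum_nonneg fun t => norm_nonneg _) haesm,
        hJ', ENNReal.toReal_mul, hcinv]
  constructor
  · -- case 1 < α < 2
    intro hα1 _hAC hInt
    have hαne : α ≠ 1 := ne_of_gt hα1
    have hKeq : (∫⁻ ω, ENNReal.ofReal ((∑' t, ‖cQ α Θ t ω‖) ^ α) ∂P)
        = ∫⁻ ω, (‖(∑' t, ‖cQ α Θ t ω‖) ^ α‖₊ : ℝ≥0∞) ∂P :=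
      lintegral_congr fun ω => (Real.enorm_eq_ofReal (Real.rpow_nonneg (hS0 ω) α)).symm
    have hKlt : (∫⁻ ω, ENNReal.ofReal ((∑' t, ‖cQ α Θ t ω‖) ^ α) ∂P) < ⊤ := by
      rw [hKeq]
      exact hInt.2
    -- Hölder's inequality
    have hconj : Real.HolderConjugate (α/(α-1)) α := by
      rw [Real.holderConjugate_iff]
      constructor
      · exact (one_lt_div (by linarith)).mpr (by linarith)
      · rw [inv_div]
        field_simp
        ring
    have hfm : Measurable (fun ω => ENNReal.ofReal (cQmax α Θ ω ^ (α-1))) :=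
      (RVaux.measurable_rpow_const_of_nonneg hMm (by linarith)).ennreal_ofReal
    have hgm2 : Measurable (fun ω => ENNReal.ofReal (∑' t, ‖cQ α Θ t ω‖)) :=
      hSm.ennreal_ofReal
    have hHold := ENNReal.lintegral_mul_le_Lp_mul_Lq P hconj hfm.aemeasurable hgm2.aemeasurable
    have hLHS : (∫⁻ ω, ((fun ω => ENNReal.ofReal (cQmax α Θ ω ^ (α-1)))
          * fun ω => ENNReal.ofReal (∑' t, ‖cQ α Θ t ω‖)) ω ∂P)
        = ∫⁻ ω, ENNReal.ofReal (cQmax α Θ ω ^ (α - 1) * ∑' t, ‖cQ α Θ t ω‖) ∂P := by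
      apply lintegral_congr
      intro ω
      show ENNReal.ofReal (cQmax α Θ ω ^ (α-1)) * ENNReal.ofReal (∑' t, ‖cQ α Θ t ω‖) = _
      rw [← ENNReal.ofReal_mul (Real.rpow_nonneg (hM0 ω) _)]
    have hfac1 : (∫⁻ ω, ENNReal.ofReal (cQmax α Θ ω ^ (α-1)) ^ (α/(α-1)) ∂P)
        = ∫⁻ ω, ENNReal.ofReal (cQmax α Θ ω ^ α) ∂P := by
      apply lintegral_congr
      intro ω
      rw [ENNReal.ofReal_rpow_of_nonneg (Real.rpow_nonneg (hM0 ω) _)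
        (le_of_lt (div_pos hα (by linarith))),
        ← Real.rpow_mul (hM0 ω)]
      congr 2
      field_simp
    have hfac1le : (∫⁻ ω, ENNReal.ofReal (cQmax α Θ ω ^ α) ∂P) ≤ 1 := by
      calc (∫⁻ ω, ENNReal.ofReal (cQmax α Θ ω ^ α) ∂P) ≤ ∫⁻ _ω, 1 ∂P := by
            apply lintegral_mono
            intro ω
            rw [← ENNReal.ofReal_one]
            exact ENNReal.ofReal_le_ofReal (Real.rpow_le_one (hM0 ω) (hM1 ω) hα.le)
        _ = 1 := by simp
    have hfac2 : (∫⁻ ω, ENNReal.ofReal (∑' t, ‖cQ α Θ t ω‖) ^ α ∂P)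
        = ∫⁻ ω, ENNReal.ofReal ((∑' t, ‖cQ α Θ t ω‖) ^ α) ∂P :=
      lintegral_congr fun ω => ENNReal.ofReal_rpow_of_nonneg (hS0 ω) hα.le
    have hHolder : (∫⁻ ω, ENNReal.ofReal (cQmax α Θ ω ^ (α - 1) * ∑' t, ‖cQ α Θ t ω‖) ∂P)
        ≤ (∫⁻ ω, ENNReal.ofReal ((∑' t, ‖cQ α Θ t ω‖) ^ α) ∂P) ^ (1/α) := by
      rw [← hLHS]
      refine le_trans hHold ?_
      rw [hfac1, hfac2]
      have h1 : (∫⁻ ω, ENNReal.ofReal (cQmax α Θ ω ^ α) ∂P) ^ (1/(α/(α-1))) ≤ 1 := by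
        calc (∫⁻ ω, ENNReal.ofReal (cQmax α Θ ω ^ α) ∂P) ^ (1/(α/(α-1)))
            ≤ (1:ℝ≥0∞) ^ (1/(α/(α-1))) :=
              ENNReal.rpow_le_rpow hfac1le
                (le_of_lt (div_pos one_pos (div_pos hα (by linarith))))
          _ = 1 := ENNReal.one_rpow _
      calc (∫⁻ ω, ENNReal.ofReal (cQmax α Θ ω ^ α) ∂P) ^ (1/(α/(α-1)))
            * (∫⁻ ω, ENNReal.ofReal ((∑' t, ‖cQ α Θ t ω‖) ^ α) ∂P) ^ (1/α)
          ≤ 1 * (∫⁻ ω, ENNReal.ofReal ((∑' t, ‖cQ α Θ t ω‖) ^ α) ∂P) ^ (1/α) :=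
            mul_le_mul_left h1 _
        _ = (∫⁻ ω, ENNReal.ofReal ((∑' t, ‖cQ α Θ t ω‖) ^ α) ∂P) ^ (1/α) := one_mul _
    have hRne : (∫⁻ ω, ENNReal.ofReal ((∑' t, ‖cQ α Θ t ω‖) ^ α) ∂P) ^ (1/α) ≠ ⊤ :=
      ENNReal.rpow_ne_top_of_nonneg (by positivity) hKlt.ne
    have hLne : (∫⁻ ω, ENNReal.ofReal (cQmax α Θ ω ^ (α - 1) * ∑' t, ‖cQ α Θ t ω‖) ∂P) ≠ ⊤ :=
      (lt_of_le_of_lt hHolder (lt_top_iff_ne_top.mpr hRne)).ne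
    obtain ⟨hint, hval⟩ := key2 hαne hLne
    have hreal : (∫ ω, cQmax α Θ ω ^ (α - 1) * (∑' t, ‖cQ α Θ t ω‖) ∂P)
        = (∫⁻ ω, ENNReal.ofReal (cQmax α Θ ω ^ (α - 1) * ∑' t, ‖cQ α Θ t ω‖) ∂P).toReal :=
      integral_eq_lintegral_of_nonneg_ae
        (Filter.Eventually.of_forall fun ω => mul_nonneg (Real.rpow_nonneg (hM0 ω) _) (hS0 ω))
        ((RVaux.measurable_rpow_const_of_nonneg hMm (by linarith)).mul hSm).aestronglyMeasurable
    refine ⟨hint, ?_, ?_⟩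
    · rw [hval, hreal]
    · rw [hval]
      have hSaval : (∫ ω, (∑' t, ‖cQ α Θ t ω‖) ^ α ∂P)
          = (∫⁻ ω, ENNReal.ofReal ((∑' t, ‖cQ α Θ t ω‖) ^ α) ∂P).toReal :=
        integral_eq_lintegral_of_nonneg_ae
          (Filter.Eventually.of_forall fun ω => Real.rpow_nonneg (hS0 ω) α)
          (RVaux.measurable_rpow_const_of_nonneg hSm hα.le).aestronglyMeasurable
      rw [hSaval]
      apply mul_le_mul_of_nonneg_left _ (inv_nonneg.mpr hθpos.le)
      calc (∫⁻ ω, ENNReal.ofReal (cQmax α Θ ω ^ (α - 1) * ∑' t, ‖cQ α Θ t ω‖) ∂P).toReal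
          ≤ ((∫⁻ ω, ENNReal.ofReal ((∑' t, ‖cQ α Θ t ω‖) ^ α) ∂P) ^ (1/α)).toReal :=
            ENNReal.toReal_mono hRne hHolder
        _ = (∫⁻ ω, ENNReal.ofReal ((∑' t, ‖cQ α Θ t ω‖) ^ α) ∂P).toReal ^ (1/α) :=
            (ENNReal.toReal_rpow _ _).symm
  · -- case α < 1
    intro hα1
    have hαne : α ≠ 1 := ne_of_lt hα1
    have hL1 : (∫⁻ ω, ENNReal.ofReal (cQmax α Θ ω ^ (α - 1) * ∑' t, ‖cQ α Θ t ω‖) ∂P) ≤ 1 := by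
      calc (∫⁻ ω, ENNReal.ofReal (cQmax α Θ ω ^ (α - 1) * ∑' t, ‖cQ α Θ t ω‖) ∂P)
          ≤ ∫⁻ _ω, 1 ∂P := by
            apply lintegral_mono_ae
            filter_upwards [hΘsum] with ω hs
            rw [← ENNReal.ofReal_one]
            exact ENNReal.ofReal_le_ofReal (RVaux.bound_lt_one hα hα1 hs)
        _ = 1 := by simp
    have hLne : (∫⁻ ω, ENNReal.ofReal (cQmax α Θ ω ^ (α - 1) * ∑' t, ‖cQ α Θ t ω‖) ∂P) ≠ ⊤ :=
      (lt_of_le_of_lt hL1 ENNReal.one_lt_top).ne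
    obtain ⟨hint, hval⟩ := key2 hαne hLne
    refine ⟨hint, ?_⟩
    rw [hval]
    have hLr : (∫⁻ ω, ENNReal.ofReal (cQmax α Θ ω ^ (α - 1) * ∑' t, ‖cQ α Θ t ω‖) ∂P).toReal ≤ 1 := by
      have := ENNReal.toReal_mono ENNReal.one_ne_top hL1
      simpa using this
    calc (extIdx P α Θ)⁻¹
          * (∫⁻ ω, ENNReal.ofReal (cQmax α Θ ω ^ (α - 1) * ∑' t, ‖cQ α Θ t ω‖) ∂P).toReal
        ≤ (extIdx P α Θ)⁻¹ * 1 :=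
          mul_le_mul_of_nonneg_left hLr (inv_nonneg.mpr hθpos.le)
      _ = (extIdx P α Θ)⁻¹ := mul_one _
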